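/- Let p be a prime number, let r and s be positive integers, let m be a non-negative integer, let B and e be positive real constants, and let H be a finite group with a normal subgroup F such that the quotient H/F is abelian and generated by r elements. Suppose that the p-Sylow subgroup F_p of F is normal in F and is isomorphic to (Z/pZ)^m, that |F| ≤ B·|F_p|^e, and that F is generated by F_p together with s additional elements. Then H contains a characteristic abelian subgroup of order coprime to p and of index at most B^{r+s+1}·|H_p|^{e(r+s+1)+r+1}, where H_p is a p-Sylow subgroup of H. -/

import Mathlib

open Polynomial Pointwise


private def addHomOfMulAut {p m : ℕ} (σ : MulAut (Fin m → Multiplicative (ZMod p))) :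
    (Fin m → ZMod p) →+ (Fin m → ZMod p) :=
  AddMonoidHom.mk' (fun x => fun i => Multiplicative.toAdd (σ (fun j => Multiplicative.ofAdd (x j)) i))
    (by
      intro x y
      funext i
      have h : σ (fun j => Multiplicative.ofAdd ((x + y) j))
          = σ (fun j => Multiplicative.ofAdd (x j)) * σ (fun j => Multiplicative.ofAdd (y j)) := by
        rw [← map_mul]; rfl
      show Multiplicative.toAdd (σ (fun j => Multiplicative.ofAdd ((x + y) j)) i) = _
      rw [h]
      rfl)

private def endOfMulAut (p m : ℕ) [NeZero p] :
    MulAut (Fin m → Multiplicative (ZMod p)) →* Module.End (ZMod p) (Fin m → ZMod p) where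
  toFun σ :=
    { toFun := addHomOfMulAut σ
      map_add' := (addHomOfMulAut σ).map_add
      map_smul' := by
        intro c x
        simp only [RingHom.id_apply]
        have hc : ((c.val : ZMod p)) = c := by rw [ZMod.natCast_val, ZMod.cast_id]
        rw [← hc, Nat.cast_smul_eq_nsmul, Nat.cast_smul_eq_nsmul]
        exact map_nsmul (addHomOfMulAut σ) c.val x }
  map_one' := by ext x; rfl
  map_mul' σ τ := by ext x; rfl

private lemma endOfMulAut_injective (p m : ℕ) [NeZero p] :
    Function.Injective (endOfMulAut p m) := by
  intro σ τ h
  have key : ∀ (ρ : MulAut (Fin m → Multiplicative (ZMod p))) (w : Fin m → Multiplicative (ZMod p)),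
      (endOfMulAut p m ρ) (fun j => Multiplicative.toAdd (w j))
        = fun i => Multiplicative.toAdd (ρ w i) := fun _ _ => rfl
  apply MulEquiv.ext
  intro w
  funext i
  have h1 : (fun i => Multiplicative.toAdd (σ w i)) = (fun i => Multiplicative.toAdd (τ w i)) := by
    rw [← key σ w, ← key τ w, h]
  exact Multiplicative.toAdd.injective (congr_fun h1 i)

set_option synthInstance.maxHeartbeats 1000000 in
set_option maxHeartbeats 2000000 in
/-- Key lemma: every automorphism of `(ℤ/pℤ)^m` has order at most `p^m`. -/
private lemma orderOf_mulAut_le {p : ℕ} (hp : p.Prime) (m : ℕ) {W : Type*} [Group W]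
    (e : W ≃* (Fin m → Multiplicative (ZMod p))) (σ : MulAut W) :
    orderOf σ ≤ p ^ m := by
  haveI : Fact p.Prime := ⟨hp⟩
  have hn : 0 < orderOf σ := by
    haveI : Finite (Fin m → Multiplicative (ZMod p)) := by infer_instance
    haveI : Finite W := Finite.of_equiv _ e.toEquiv.symm
    haveI : Finite (MulAut W) :=
      Finite.of_injective (fun (a : MulAut W) => (a : W → W)) (fun a b h => by
        ext x; exact congr_fun h x)
    exact orderOf_pos σ
  rcases Nat.eq_zero_or_pos m with hm | hm
  · subst hm
    haveI : Subsingleton (Fin 0 → Multiplicative (ZMod p)) := by infer_instance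
    haveI : Subsingleton W := e.toEquiv.subsingleton
    haveI : Subsingleton (MulAut W) := by
      constructor; intro a b; ext x; exact Subsingleton.elim _ _
    rw [Subsingleton.elim σ 1, orderOf_one]
    simp
  · haveI : Nonempty (Fin m) := ⟨⟨0, hm⟩⟩
    set τ : MulAut (Fin m → Multiplicative (ZMod p)) := (MulAut.congr e) σ with hτ
    have hord : orderOf τ = orderOf σ := orderOf_injective ((MulAut.congr e) : MulAut W →* MulAut (Fin m → Multiplicative (ZMod p))) (MulAut.congr e).injective σ
    set u : Module.End (ZMod p) (Fin m → ZMod p) := endOfMulAut p m τ with hu0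
    have hordu : orderOf u = orderOf τ := orderOf_injective _ (endOfMulAut_injective p m) τ
    haveI : Nontrivial (Fin m → ZMod p) := by infer_instance
    haveI : Nontrivial (Module.End (ZMod p) (Fin m → ZMod p)) := by
      refine ⟨1, 0, fun h => ?_⟩
      obtain ⟨x, hx⟩ := exists_ne (0 : Fin m → ZMod p)
      exact hx (by simpa using LinearMap.congr_fun h x)
    have hu : IsIntegral (ZMod p) u := IsIntegral.of_finite (ZMod p) u
    set μ := minpoly (ZMod p) u with hμdef
    have hμmonic : μ.Monic := minpoly.monic hu
    set d := μ.natDegree with hd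
    have hdm : d ≤ m := by
      have h1 : μ ∣ LinearMap.charpoly u := LinearMap.minpoly_dvd_charpoly u
      have h2 : (LinearMap.charpoly u).natDegree = Module.finrank (ZMod p) (Fin m → ZMod p) :=
        LinearMap.charpoly_natDegree (f := u)
      have h3 : Module.finrank (ZMod p) (Fin m → ZMod p) = m := by
        simpa using Module.finrank_fin_fun (ZMod p) (n := m)
      calc d ≤ (LinearMap.charpoly u).natDegree :=
              Polynomial.natDegree_le_of_dvd h1 (LinearMap.charpoly_monic u).ne_zero
        _ = m := by rw [h2, h3]
    set R : Subalgebra (ZMod p) (Module.End (ZMod p) (Fin m → ZMod p)) :=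
      (Polynomial.aeval u).range with hR
    have humem : u ∈ R := ⟨Polynomial.X, by simp⟩
    have haev : ∀ q : Polynomial (ZMod p), (Polynomial.aeval u) (q %ₘ μ) = (Polynomial.aeval u) q := by
      intro q
      conv_rhs => rw [← Polynomial.modByMonic_add_div q μ]
      rw [map_add, map_mul, minpoly.aeval, zero_mul, add_zero]
    have hsurj : ∀ y : R, ∃ q : Polynomial.degreeLT (ZMod p) d, (Polynomial.aeval u) q.1 = y.1 := by
      intro y
      obtain ⟨q, hq⟩ := y.2
      refine ⟨⟨q %ₘ μ, ?_⟩, ?_⟩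
      · rw [Polynomial.mem_degreeLT]
        calc (q %ₘ μ).degree < μ.degree := Polynomial.degree_modByMonic_lt q hμmonic
          _ ≤ (d : WithBot ℕ) := Polynomial.degree_le_natDegree
      · exact (haev q).trans hq
    haveI : Finite (Module.End (ZMod p) (Fin m → ZMod p)) :=
      Finite.of_injective (fun (f : Module.End (ZMod p) (Fin m → ZMod p)) => (f : (Fin m → ZMod p) → (Fin m → ZMod p)))
        (fun a b h => LinearMap.ext (fun x => congr_fun h x))
    haveI : Finite R := Subtype.finite
    haveI : Finite (Fin d → ZMod p) := by infer_instance
    haveI : Finite (Polynomial.degreeLT (ZMod p) d) :=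
      Finite.of_equiv _ (Polynomial.degreeLTEquiv (ZMod p) d).toEquiv.symm
    haveI : Finite Rˣ := Finite.of_injective (fun (w : Rˣ) => (w : R)) (fun _ _ => Units.ext)
    have hcardR : Nat.card R ≤ p ^ d := by
      have hsurj' : Function.Surjective
          (fun q : Polynomial.degreeLT (ZMod p) d => (⟨(Polynomial.aeval u) q.1,
            ⟨q.1, rfl⟩⟩ : R)) := by
        rintro y
        obtain ⟨q, hq⟩ := hsurj y
        exact ⟨q, Subtype.ext hq⟩
      calc Nat.card R ≤ Nat.card (Polynomial.degreeLT (ZMod p) d) :=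
            Nat.card_le_card_of_surjective _ hsurj'
        _ = Nat.card (Fin d → ZMod p) :=
            Nat.card_congr (Polynomial.degreeLTEquiv (ZMod p) d).toEquiv
        _ = p ^ d := by simp [Nat.card_eq_fintype_card, ZMod.card]
    set n := orderOf σ with hndef
    have hn1 : 1 ≤ n := hn
    have hun : u ^ n = 1 := by
      have : n = orderOf u := by rw [hordu, hord]
      rw [this]; exact pow_orderOf_eq_one u
    set ub : R := ⟨u, humem⟩ with hub
    have hubn : ub ^ n = 1 := by
      apply Subtype.ext
      push_cast
      exact hun
    haveI : Nontrivial R := ⟨1, 0, fun h => by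
      have h1 := congr_arg (Subtype.val) h
      have h2 : (1 : Module.End (ZMod p) (Fin m → ZMod p)) = 0 := by simpa using h1
      exact one_ne_zero h2⟩
    set v : Rˣ := ⟨ub, ub ^ (n - 1),
      by rw [← pow_succ', Nat.sub_add_cancel hn1]; exact hubn,
      by rw [← pow_succ, Nat.sub_add_cancel hn1]; exact hubn⟩ with hv
    have hordub : orderOf ub = n := by
      have h1 : orderOf (({ toFun := Subtype.val, map_one' := rfl, map_mul' := fun _ _ => rfl } :
          ↥R →* Module.End (ZMod p) (Fin m → ZMod p)) ub) = orderOf ub :=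
        orderOf_injective _ Subtype.coe_injective ub
      have h2 : ({ toFun := Subtype.val, map_one' := rfl, map_mul' := fun _ _ => rfl } :
          ↥R →* Module.End (ZMod p) (Fin m → ZMod p)) ub = u := rfl
      rw [h2] at h1
      rw [← h1, hordu, hord]
    have hordv : orderOf v = n := by
      have := orderOf_units (y := v)
      have hvc : ((v : R)) = ub := rfl
      rw [hvc] at this
      rw [← this, hordub]
    have hdvd : n ∣ Nat.card Rˣ := by rw [← hordv]; exact orderOf_dvd_natCard v
    have hlt : Nat.card Rˣ < Nat.card R := by
      haveI : Fintype R := Fintype.ofFinite _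
      haveI : Fintype Rˣ := Fintype.ofFinite _
      rw [Nat.card_eq_fintype_card, Nat.card_eq_fintype_card]
      refine Fintype.card_lt_of_injective_of_notMem (fun (w : Rˣ) => (w : R)) (fun _ _ => Units.ext)
        (b := 0) ?_
      rintro ⟨w, hw⟩
      have hw' : ((w : R)) = 0 := hw
      have hmul : (w : R) * ((w⁻¹ : Rˣ) : R) = 1 := by
        rw [← Units.val_mul, mul_inv_cancel]; rfl
      rw [hw', zero_mul] at hmul
      exact zero_ne_one hmul
    have hpos : 0 < Nat.card Rˣ := Nat.card_pos
    calc n ≤ Nat.card Rˣ := Nat.le_of_dvd hpos hdvd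
      _ ≤ Nat.card R := le_of_lt hlt
      _ ≤ p ^ d := hcardR
      _ ≤ p ^ m := Nat.pow_le_pow_right hp.pos hdm


private lemma card_sup_le_of_normal {G : Type*} [Group G] [Finite G] (A B : Subgroup G)
    [hB : B.Normal] :
    Nat.card (A ⊔ B : Subgroup G) ≤ Nat.card A * Nat.card B := by
  calc Nat.card (A ⊔ B : Subgroup G) = Nat.card ((A : Set G) * (B : Set G)) := by
        rw [← Subgroup.mul_normal A B]; rfl
    _ ≤ Nat.card (A : Set G) * Nat.card (B : Set G) := Set.natCard_mul_le
    _ = Nat.card A * Nat.card B := rfl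

private lemma card_le_prod_orderOf {G : Type*} [Group G] [Finite G]
    (hc : ∀ a b : G, a * b = b * a) (T : Finset G)
    (hT : Subgroup.closure (T : Set G) = ⊤) :
    Nat.card G ≤ ∏ t ∈ T, orderOf t := by
  classical
  have hnorm : ∀ K : Subgroup G, K.Normal := fun K =>
    ⟨fun n hn g => by rw [hc g n, mul_assoc, mul_inv_cancel, mul_one]; exact hn⟩
  have main : ∀ T : Finset G,
      Nat.card (Subgroup.closure (T : Set G)) ≤ ∏ t ∈ T, orderOf t := by
    intro T
    induction T using Finset.induction with
    | empty => simp [Subgroup.closure_empty]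
    | @insert a T ha ih =>
      have h1 : Subgroup.closure ((insert a T : Finset G) : Set G)
          = Subgroup.zpowers a ⊔ Subgroup.closure (T : Set G) := by
        rw [Finset.coe_insert, Set.insert_eq, Subgroup.closure_union,
          Subgroup.zpowers_eq_closure]
      haveI : (Subgroup.closure (T : Set G)).Normal := hnorm _
      calc Nat.card (Subgroup.closure ((insert a T : Finset G) : Set G))
          ≤ Nat.card (Subgroup.zpowers a) * Nat.card (Subgroup.closure (T : Set G)) := by
            rw [h1]; exact card_sup_le_of_normal _ _
        _ ≤ orderOf a * ∏ t ∈ T, orderOf t :=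
            Nat.mul_le_mul (le_of_eq (Nat.card_zpowers a)) ih
        _ = ∏ t ∈ insert a T, orderOf t := (Finset.prod_insert ha).symm
  calc Nat.card G = Nat.card (Subgroup.closure (T : Set G)) := by
        rw [hT]; exact (Nat.card_congr Subgroup.topEquiv.toEquiv).symm
    _ ≤ ∏ t ∈ T, orderOf t := main T

private lemma index_centralizer_le {H : Type*} [Group H] [Finite H] (F : Subgroup H)
    [hF : F.Normal] (habelian : ∀ a b : H ⧸ F, a * b = b * a) (x : H) :
    (Subgroup.centralizer {x}).index ≤ Nat.card F := by
  rw [show (Subgroup.centralizer {x}).index = (MulAction.stabilizer (ConjAct H) x).index by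
      refine Eq.trans ?_ (Subgroup.index_comap_of_surjective _ (f := (ConjAct.toConjAct : H ≃* ConjAct H).toMonoidHom) ConjAct.toConjAct.surjective)
      congr 1; ext y
      simp only [Subgroup.mem_centralizer_singleton_iff, Subgroup.mem_comap, MulAction.mem_stabilizer_iff,
        MulEquiv.coe_toMonoidHom, ConjAct.smul_def, ConjAct.ofConjAct_toConjAct, mul_inv_eq_iff_eq_mul],
    MulAction.index_stabilizer, ← Nat.card_coe_set_eq]
  refine Nat.card_le_card_of_injective
    (fun y => (⟨y.1 * x⁻¹, ?_⟩ : F)) ?_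
  · obtain ⟨g, hg⟩ := y.2
    rw [← QuotientGroup.eq_one_iff]
    have hy : y.1 = ConjAct.ofConjAct g * x * (ConjAct.ofConjAct g)⁻¹ := by
      rw [← hg]; rfl
    rw [hy]
    have hcomm := habelian (QuotientGroup.mk (ConjAct.ofConjAct g)) (QuotientGroup.mk x)
    simp only [QuotientGroup.mk_mul, QuotientGroup.mk_inv]
    rw [show ((ConjAct.ofConjAct g : H) : H ⧸ F) * (x : H ⧸ F) = (x : H ⧸ F) *
      ((ConjAct.ofConjAct g : H) : H ⧸ F) from hcomm]
    group
  · intro y z h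
    have h2 := congr_arg Subtype.val h
    simp only at h2
    exact Subtype.ext (mul_right_cancel (b := x⁻¹) h2)

private lemma index_inf_centralizers_le {H : Type*} [Group H] [Finite H] (F : Subgroup H)
    [hF : F.Normal] (habelian : ∀ a b : H ⧸ F, a * b = b * a) (T : Finset H) :
    (T.inf fun x => Subgroup.centralizer {x}).index ≤ (Nat.card F) ^ T.card := by
  classical
  induction T using Finset.induction with
  | empty => simp [Subgroup.index_top]
  | @insert a T ha ih =>
    rw [Finset.inf_insert, Finset.card_insert_of_notMem ha, pow_succ']
    calc (Subgroup.centralizer {a} ⊓ T.inf fun x => Subgroup.centralizer {x}).index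
        ≤ (Subgroup.centralizer {a}).index * (T.inf fun x => Subgroup.centralizer {x}).index :=
          Subgroup.index_inf_le
      _ ≤ Nat.card F * (Nat.card F) ^ T.card :=
          Nat.mul_le_mul (index_centralizer_le F habelian a) ih

/-- Let `1 → F → H → H̄ → 1` be an exact sequence of finite groups with `H̄` abelian and
generated by `r` elements. Suppose the `p`-Sylow subgroup `F_p` of `F` is normal in `F` and
isomorphic to `(ℤ/pℤ)^m`, that `|F| ≤ B * |F_p|^e`, and that `F` is generated by `F_p`
together with `s` additional elements. Then `H` contains a characteristic abelian subgroup
of order coprime to `p` and index at most `B^(r+s+1) * |H_p|^(e(r+s+1)+r+1)`. -/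
theorem characteristic_abelian_of_abelian_quotient_elementary_sylow
    (p : ℕ) (hp : p.Prime) (r s : ℕ) (hr : 0 < r) (hs : 0 < s) (m : ℕ)
    (B e : ℝ) (hB : 0 < B) (he : 0 < e)
    (H : Type*) [Group H] [Finite H]
    (F : Subgroup H) (hF : F.Normal)
    (habelian : ∀ a b : H ⧸ F, a * b = b * a)
    (hgenQ : ∃ S : Finset (H ⧸ F), S.card ≤ r ∧
      Subgroup.closure (S : Set (H ⧸ F)) = ⊤)
    (Fp : Sylow p ↥F)
    (hFpnormal : (Fp : Subgroup ↥F).Normal)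
    (hFpiso : Nonempty (↥(Fp : Subgroup ↥F) ≃* (Fin m → Multiplicative (ZMod p))))
    (hcard : (Nat.card F : ℝ) ≤ B * (Nat.card Fp : ℝ) ^ e)
    (hgenF : ∃ S : Finset ↥F, S.card ≤ s ∧
      (Fp : Subgroup ↥F) ⊔ Subgroup.closure (S : Set ↥F) = ⊤)
    (Hp : Sylow p H) :
    ∃ A : Subgroup H, A.Characteristic ∧ IsMulCommutative A ∧
      Nat.Coprime (Nat.card A) p ∧
      (A.index : ℝ) ≤ B ^ (r + s + 1) *
        (Nat.card Hp : ℝ) ^ (e * (r + s + 1) + r + 1) := by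
  classical
  haveI : Fact p.Prime := ⟨hp⟩
  obtain ⟨S, hScard, hSclosure⟩ := hgenQ
  obtain ⟨Y, hYcard, hYclosure⟩ := hgenF
  obtain ⟨iso⟩ := hFpiso
  -- `A` is the subgroup of central elements of order coprime to `p`
  let A : Subgroup H :=
    { carrier := {x : H | x ∈ Subgroup.center H ∧ ¬ p ∣ orderOf x}
      one_mem' := ⟨(Subgroup.center H).one_mem, by
        rw [orderOf_one]; exact fun hd => hp.ne_one (Nat.dvd_one.mp hd)⟩
      mul_mem' := by
        rintro a b ⟨ha1, ha2⟩ ⟨hb1, hb2⟩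
        refine ⟨(Subgroup.center H).mul_mem ha1 hb1, fun hdvd => ?_⟩
        have hcomm : Commute a b := (Subgroup.mem_center_iff.mp ha1 b).symm
        have h1 : p ∣ Nat.lcm (orderOf a) (orderOf b) :=
          hdvd.trans hcomm.orderOf_mul_dvd_lcm
        have h2 : p ∣ orderOf a * orderOf b := h1.trans (Nat.lcm_dvd_mul _ _)
        exact ((Nat.Prime.dvd_mul hp).mp h2).elim ha2 hb2
      inv_mem' := by
        rintro a ⟨ha1, ha2⟩
        exact ⟨(Subgroup.center H).inv_mem ha1, by rwa [orderOf_inv]⟩ }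
  have hmemA : ∀ x : H, x ∈ A ↔ x ∈ Subgroup.center H ∧ ¬ p ∣ orderOf x := fun _ => Iff.rfl
  have hAleZ : A ≤ Subgroup.center H := fun x hx => ((hmemA x).mp hx).1
  refine ⟨A, ?_, ?_, ?_, ?_⟩
  · -- characteristic
    rw [Subgroup.characteristic_iff_map_le]
    intro φ y hy
    obtain ⟨x, hx, rfl⟩ := Subgroup.mem_map.mp hy
    obtain ⟨hx1, hx2⟩ := (hmemA x).mp hx
    refine (hmemA _).mpr ⟨?_, ?_⟩
    · have hfix := (Subgroup.centerCharacteristic (G := H)).fixed φ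
      rw [← hfix] at hx1
      exact hx1
    · rw [orderOf_injective φ.toMonoidHom φ.injective x]
      exact hx2
  · -- commutative
    exact ⟨⟨fun a b => Subtype.ext
      ((Subgroup.mem_center_iff.mp ((hmemA _).mp a.2).1 b).symm)⟩⟩
  · -- coprime
    refine Nat.coprime_comm.mp ((hp.coprime_iff_not_dvd).mpr ?_)
    intro hdvd
    haveI : Fintype ↥A := Fintype.ofFinite _
    rw [Nat.card_eq_fintype_card] at hdvd
    obtain ⟨a, ha⟩ := exists_prime_orderOf_dvd_card (G := ↥A) p hdvd
    have hcoe : orderOf (a : H) = p := by rw [Subgroup.orderOf_coe, ha]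
    exact ((hmemA _).mp a.2).2 (hcoe ▸ dvd_refl p)
  -- the index bound
  -- the image of the Sylow subgroup of F inside H
  set V : Subgroup H := Subgroup.map F.subtype (Fp : Subgroup ↥F) with hVdef
  have hVnormal : V.Normal := by
    haveI := Sylow.unique_of_normal Fp hFpnormal
    constructor
    intro v hv h
    obtain ⟨w, hw, rfl⟩ := Subgroup.mem_map.mp hv
    set φh : MulAut ↥F := MulAut.conjNormal (H := F) h with hφh
    have h2 : ((φh • Fp : Sylow p ↥F) : Subgroup ↥F) = (Fp : Subgroup ↥F) := by
      rw [Subsingleton.elim (φh • Fp) Fp]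
    have h1 : φh • (Fp : Subgroup ↥F) = (Fp : Subgroup ↥F) := by
      rw [← Sylow.pointwise_smul_def, h2]
    have h3 : φh • w ∈ φh • (Fp : Subgroup ↥F) :=
      Subgroup.smul_mem_pointwise_smul w _ _ hw
    rw [h1] at h3
    refine Subgroup.mem_map.mpr ⟨φh • w, h3, ?_⟩
    show (φh w : H) = h * (F.subtype w) * h⁻¹
    rw [hφh, MulAut.conjNormal_apply]
    rfl
  haveI := hVnormal
  have hFpcard : Nat.card Fp = p ^ m := by
    calc Nat.card Fp = Nat.card (Fin m → Multiplicative (ZMod p)) :=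
          Nat.card_congr iso.toEquiv
      _ = p ^ m := by
          simp [Nat.card_eq_fintype_card, ZMod.card]
  have eVF : ↥(Fp : Subgroup ↥F) ≃* ↥V :=
    Subgroup.equivMapOfInjective (Fp : Subgroup ↥F) F.subtype (Subgroup.subtype_injective F)
  have eW : ↥V ≃* (Fin m → Multiplicative (ZMod p)) := eVF.symm.trans iso
  have hVcard : Nat.card V = p ^ m := by
    rw [← hFpcard]
    exact Nat.card_congr eVF.symm.toEquiv
  have hpmHp : p ^ m ≤ Nat.card Hp := by
    obtain ⟨Q, hQ⟩ := (IsPGroup.map Fp.isPGroup' F.subtype).exists_le_sylow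
    calc p ^ m = Nat.card V := hVcard.symm
      _ ≤ Nat.card Q := Subgroup.card_le_of_le hQ
      _ = Nat.card Hp := by rw [Sylow.card_eq_multiplicity, Sylow.card_eq_multiplicity]
  -- the centralizer of V
  set C : Subgroup H := Subgroup.centralizer (V : Set H) with hCdef
  have hCnormal : C.Normal := by
    constructor
    intro c hc h
    rw [Subgroup.mem_centralizer_iff] at hc ⊢
    intro g hg
    have hg' : h⁻¹ * g * h ∈ V := by
      have := hVnormal.conj_mem g hg h⁻¹
      rwa [inv_inv] at this
    have hcomm := hc _ hg'
    calc g * (h * c * h⁻¹) = h * ((h⁻¹ * g * h) * c) * h⁻¹ := by group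
      _ = h * (c * (h⁻¹ * g * h)) * h⁻¹ := by rw [hcomm]
      _ = (h * c * h⁻¹) * g := by group
  haveI := hCnormal
  -- generators
  set X : Finset H := S.image Quotient.out with hXdef
  set Yim : Finset H := Y.image F.subtype with hYimdef
  set T : Finset H := X ∪ Yim with hTdef
  have hTcard : T.card ≤ r + s := by
    calc T.card ≤ X.card + Yim.card := Finset.card_union_le _ _
      _ ≤ r + s := Nat.add_le_add (Finset.card_image_le.trans hScard)
          (Finset.card_image_le.trans hYcard)
  have hFW : F = V ⊔ Subgroup.closure (Yim : Set H) := by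
    have h0 : F = Subgroup.map F.subtype ⊤ := by
      rw [← MonoidHom.range_eq_map, Subgroup.range_subtype]
    rw [h0, ← hYclosure, Subgroup.map_sup, MonoidHom.map_closure]
    rw [hYimdef, Finset.coe_image]
  have hgen : Subgroup.closure ((V : Set H) ∪ (T : Set H)) = ⊤ := by
    set Wc := Subgroup.closure ((V : Set H) ∪ (T : Set H)) with hWcdef
    have hVW : V ≤ Wc := fun v hv => Subgroup.subset_closure (Or.inl hv)
    have hTW : ∀ t ∈ T, t ∈ Wc := fun t ht => Subgroup.subset_closure (Or.inr ht)
    have hYW : Subgroup.closure (Yim : Set H) ≤ Wc := by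
      rw [Subgroup.closure_le]
      intro y hy
      exact hTW y (Finset.mem_union_right _ hy)
    have hFWc : F ≤ Wc := by rw [hFW]; exact sup_le hVW hYW
    have hmap : Subgroup.map (QuotientGroup.mk' F) Wc = ⊤ := by
      rw [eq_top_iff, ← hSclosure, Subgroup.closure_le]
      intro q hq
      refine Subgroup.mem_map.mpr ⟨q.out, ?_, ?_⟩
      · exact hTW q.out (Finset.mem_union_left _ (Finset.mem_image_of_mem _ hq))
      · exact QuotientGroup.out_eq' q
    have hcm := Subgroup.comap_map_eq (QuotientGroup.mk' F) Wc
    rw [hmap, QuotientGroup.ker_mk', Subgroup.comap_top, sup_eq_left.mpr hFWc] at hcm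
    exact hcm.symm
  set K := C ⊓ T.inf (fun x => Subgroup.centralizer {x}) with hKdef
  have hKle : K ≤ Subgroup.center H := by
    intro z hz
    obtain ⟨hz1, hz2⟩ := Subgroup.mem_inf.mp hz
    rw [Subgroup.mem_center_iff]
    intro g
    have hg : g ∈ Subgroup.closure ((V : Set H) ∪ (T : Set H)) := by
      rw [hgen]; exact Subgroup.mem_top g
    induction hg using Subgroup.closure_induction with
    | mem x hx =>
      rcases hx with hx | hx
      · exact Subgroup.mem_centralizer_iff.mp hz1 x hx
      · have hle := Finset.inf_le (f := fun x : H => Subgroup.centralizer {x}) hx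
        exact Subgroup.mem_centralizer_iff.mp (hle hz2) x rfl
    | one => rw [one_mul, mul_one]
    | mul x y hx hy hxz hyz => rw [mul_assoc, hyz, ← mul_assoc, hxz, mul_assoc]
    | inv x hx hxz => exact (Commute.inv_left hxz).eq
  -- index bounds
  have hZK : (Subgroup.center H).index ≤ K.index :=
    Nat.le_of_dvd (Nat.pos_of_ne_zero K.index_ne_zero_of_finite)
      (Subgroup.index_dvd_of_le hKle)
  have hKC : K.index ≤ C.index * (Nat.card F) ^ (r + s) := by
    calc K.index ≤ C.index * (T.inf fun x => Subgroup.centralizer {x}).index :=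
          Subgroup.index_inf_le
      _ ≤ C.index * (Nat.card F) ^ T.card :=
          Nat.mul_le_mul_left _ (index_inf_centralizers_le F habelian T)
      _ ≤ C.index * (Nat.card F) ^ (r + s) :=
          Nat.mul_le_mul_left _ (Nat.pow_le_pow_right Nat.card_pos hTcard)
  have hCind : C.index ≤ Nat.card F * (p ^ m) ^ r := by
    set N₁ := Subgroup.map (QuotientGroup.mk' C) F with hN₁def
    haveI hN₁ : N₁.Normal := Subgroup.Normal.map hF _ (QuotientGroup.mk'_surjective C)
    have e1 : Nat.card (H ⧸ C) = Nat.card ((H ⧸ C) ⧸ N₁) * Nat.card N₁ :=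
      Subgroup.card_eq_card_quotient_mul_card_subgroup N₁
    have hN₁card : Nat.card N₁ ≤ Nat.card F := by
      have hcoe : (N₁ : Set (H ⧸ C)) = (QuotientGroup.mk' C) '' (F : Set H) :=
        Subgroup.coe_map _ _
      calc Nat.card N₁ = Nat.card ((QuotientGroup.mk' C) '' (F : Set H)) :=
            Nat.card_congr (Equiv.setCongr hcoe)
        _ ≤ Nat.card (F : Set H) := Nat.card_image_le (Set.toFinite _)
        _ = Nat.card F := Nat.card_coe_set_eq (F : Set H) ▸ rfl
    set π : H →* (H ⧸ C) ⧸ N₁ := (QuotientGroup.mk' N₁).comp (QuotientGroup.mk' C) with hπdef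
    have hπsurj : Function.Surjective π :=
      (QuotientGroup.mk'_surjective N₁).comp (QuotientGroup.mk'_surjective C)
    have hFker : ∀ x ∈ F, π x = 1 := by
      intro x hx
      show (QuotientGroup.mk' N₁) ((QuotientGroup.mk' C) x) = 1
      rw [QuotientGroup.mk'_apply, QuotientGroup.eq_one_iff]
      exact Subgroup.mem_map.mpr ⟨x, hx, rfl⟩
    set ρ : H ⧸ F →* (H ⧸ C) ⧸ N₁ := QuotientGroup.lift F π hFker with hρdef
    have hρπ : ∀ x : H, ρ (QuotientGroup.mk x) = π x := fun x => rfl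
    have hρsurj : Function.Surjective ρ := by
      intro y
      obtain ⟨x, hx⟩ := hπsurj y
      exact ⟨QuotientGroup.mk x, by rw [hρπ]; exact hx⟩
    have hcommQ : ∀ a b : (H ⧸ C) ⧸ N₁, a * b = b * a := by
      intro a b
      obtain ⟨a', rfl⟩ := hρsurj a
      obtain ⟨b', rfl⟩ := hρsurj b
      rw [← map_mul, ← map_mul, habelian a' b']
    have hT2closure :
        Subgroup.closure ((S.image ρ : Finset ((H ⧸ C) ⧸ N₁)) : Set ((H ⧸ C) ⧸ N₁)) = ⊤ := by
      rw [Finset.coe_image, ← MonoidHom.map_closure, hSclosure]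
      exact Subgroup.map_top_of_surjective ρ hρsurj
    haveI : Finite (MulAut ↥V) :=
      Finite.of_injective (fun (a : MulAut ↥V) => (a : ↥V → ↥V)) (fun a b h => by
        ext x; exact congr_arg Subtype.val (congr_fun h x))
    have hord : ∀ t ∈ S.image ρ, orderOf t ≤ p ^ m := by
      intro t ht
      obtain ⟨q, hq, rfl⟩ := Finset.mem_image.mp ht
      set x := q.out with hxdef
      set σx : MulAut ↥V := MulAut.conjNormal x with hσdef
      set n := orderOf σx with hndef
      have hnpos : 0 < n := orderOf_pos σx
      have hnle : n ≤ p ^ m := orderOf_mulAut_le hp m eW σx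
      have hxn : x ^ n ∈ C := by
        rw [hCdef, Subgroup.mem_centralizer_iff]
        intro g hg
        have h1 : (MulAut.conjNormal (x ^ n) : MulAut ↥V) = 1 := by
          rw [map_pow]
          exact pow_orderOf_eq_one σx
        have h2 : ((MulAut.conjNormal (x ^ n) : MulAut ↥V) ⟨g, hg⟩ : H) = g := by
          rw [h1]; rfl
        rw [MulAut.conjNormal_apply] at h2
        calc g * x ^ n = (x ^ n * g * (x ^ n)⁻¹) * x ^ n := by rw [h2]
          _ = x ^ n * g := by group
      have hπx : (ρ q) ^ n = 1 := by
        have hq1 : ρ q = π x := by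
          rw [← QuotientGroup.out_eq' q]
          exact hρπ x
        rw [hq1, ← map_pow]
        have hc1 : (QuotientGroup.mk' C) (x ^ n) = 1 := (QuotientGroup.eq_one_iff _).mpr hxn
        show (QuotientGroup.mk' N₁) ((QuotientGroup.mk' C) (x ^ n)) = 1
        rw [hc1, map_one]
      calc orderOf (ρ q) ≤ n := Nat.le_of_dvd hnpos (orderOf_dvd_of_pow_eq_one hπx)
        _ ≤ p ^ m := hnle
    have hcardQ : Nat.card ((H ⧸ C) ⧸ N₁) ≤ (p ^ m) ^ r := by
      calc Nat.card ((H ⧸ C) ⧸ N₁) ≤ ∏ t ∈ S.image ρ, orderOf t :=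
            card_le_prod_orderOf hcommQ _ hT2closure
        _ ≤ (p ^ m) ^ (S.image ρ).card := Finset.prod_le_pow_card _ _ _ hord
        _ ≤ (p ^ m) ^ r := Nat.pow_le_pow_right (Nat.pow_pos hp.pos)
            (Finset.card_image_le.trans hScard)
    calc C.index = Nat.card (H ⧸ C) := Subgroup.index_eq_card C
      _ = Nat.card ((H ⧸ C) ⧸ N₁) * Nat.card N₁ := e1
      _ ≤ (p ^ m) ^ r * Nat.card F := Nat.mul_le_mul hcardQ hN₁card
      _ = Nat.card F * (p ^ m) ^ r := Nat.mul_comm _ _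
  have hrelind : A.relIndex (Subgroup.center H) ≤ Nat.card Hp := by
    set Z := Subgroup.center H with hZdef
    set A' := A.subgroupOf Z with hA'def
    have hZcomm : ∀ a b : ↥Z, a * b = b * a := fun a b =>
      Subtype.ext ((Subgroup.mem_center_iff.mp a.2 b.1).symm)
    haveI hA'normal : A'.Normal :=
      ⟨fun n hn g => by rw [hZcomm g n, mul_assoc, mul_inv_cancel, mul_one]; exact hn⟩
    have hPQ : IsPGroup p (↥Z ⧸ A') := by
      intro g'
      obtain ⟨z, rfl⟩ := QuotientGroup.mk'_surjective A' g'
      refine ⟨(orderOf z).factorization p, ?_⟩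
      rw [← map_pow]
      rw [QuotientGroup.mk'_apply, QuotientGroup.eq_one_iff]
      rw [hA'def, Subgroup.mem_subgroupOf]
      refine (hmemA _).mpr ⟨(z ^ p ^ (orderOf z).factorization p).2, ?_⟩
      rw [Subgroup.orderOf_coe]
      rw [orderOf_pow]
      rw [Nat.gcd_eq_right (Nat.ordProj_dvd (orderOf z) p)]
      exact Nat.not_dvd_ordCompl hp (orderOf_pos z).ne'
    obtain ⟨k', hk'⟩ := hPQ.exists_card_eq
    have e2 : A.relIndex Z = Nat.card (↥Z ⧸ A') := by
      rw [Subgroup.relIndex, Subgroup.index_eq_card]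
    have hdvd1 : Nat.card (↥Z ⧸ A') ∣ Nat.card ↥Z := by
      rw [← Subgroup.index_eq_card]
      exact Subgroup.index_dvd_card A'
    have hdvd2 : Nat.card ↥Z ∣ Nat.card H := Subgroup.card_subgroup_dvd_card Z
    have hdvd3 : p ^ k' ∣ Nat.card H := hk' ▸ (hdvd1.trans hdvd2)
    have hk'le : k' ≤ (Nat.card H).factorization p :=
      (Nat.Prime.pow_dvd_iff_le_factorization hp Nat.card_pos.ne').mp hdvd3
    rw [e2, hk', Sylow.card_eq_multiplicity Hp]
    exact Nat.pow_le_pow_right hp.pos hk'le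
  -- assemble the natural-number bound
  have hrel : A.relIndex (Subgroup.center H) * (Subgroup.center H).index = A.index :=
    Subgroup.relIndex_mul_index hAleZ
  have hnat : A.index ≤ Nat.card Hp * ((Nat.card F * (p ^ m) ^ r) * (Nat.card F) ^ (r + s)) := by
    rw [← hrel]
    refine Nat.mul_le_mul hrelind ?_
    calc (Subgroup.center H).index ≤ K.index := hZK
      _ ≤ C.index * (Nat.card F) ^ (r + s) := hKC
      _ ≤ (Nat.card F * (p ^ m) ^ r) * (Nat.card F) ^ (r + s) :=
          Nat.mul_le_mul_right _ hCind
  -- pass to the reals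
  have hxpos : (0 : ℝ) < (Nat.card Hp : ℝ) := by exact_mod_cast Nat.card_pos
  have hbnn : (0 : ℝ) ≤ B * (Nat.card Hp : ℝ) ^ e := by positivity
  have hFb : (Nat.card F : ℝ) ≤ B * (Nat.card Hp : ℝ) ^ e := by
    refine hcard.trans ?_
    have h1 : (Nat.card Fp : ℝ) ^ e ≤ (Nat.card Hp : ℝ) ^ e := by
      refine Real.rpow_le_rpow (by positivity) ?_ he.le
      exact_mod_cast (hFpcard ▸ hpmHp : Nat.card Fp ≤ Nat.card Hp)
    exact mul_le_mul_of_nonneg_left h1 hB.le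
  have hpmx : ((p : ℝ) ^ m) ≤ (Nat.card Hp : ℝ) := by exact_mod_cast hpmHp
  have hreal1 : (A.index : ℝ) ≤
      (Nat.card Hp : ℝ) * (((Nat.card F : ℝ) * ((p : ℝ) ^ m) ^ r) * (Nat.card F : ℝ) ^ (r + s)) := by
    exact_mod_cast Nat.cast_le.mpr hnat
  have hreal2 : (A.index : ℝ) ≤
      (B * (Nat.card Hp : ℝ) ^ e) ^ (r + s + 1) * (Nat.card Hp : ℝ) ^ (r + 1) := by
    refine hreal1.trans ?_
    have hFnn : (0 : ℝ) ≤ (Nat.card F : ℝ) := by positivity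
    have h2 : ((p : ℝ) ^ m) ^ r ≤ (Nat.card Hp : ℝ) ^ r :=
      pow_le_pow_left₀ (by positivity) hpmx r
    have h3 : (Nat.card F : ℝ) ^ (r + s) ≤ (B * (Nat.card Hp : ℝ) ^ e) ^ (r + s) :=
      pow_le_pow_left₀ hFnn hFb (r + s)
    calc (Nat.card Hp : ℝ) * (((Nat.card F : ℝ) * ((p : ℝ) ^ m) ^ r) * (Nat.card F : ℝ) ^ (r + s))
        ≤ (Nat.card Hp : ℝ) * (((B * (Nat.card Hp : ℝ) ^ e) * (Nat.card Hp : ℝ) ^ r)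
            * (B * (Nat.card Hp : ℝ) ^ e) ^ (r + s)) := by
          refine mul_le_mul_of_nonneg_left ?_ hxpos.le
          refine mul_le_mul ?_ h3 (by positivity) (by positivity)
          exact mul_le_mul hFb h2 (by positivity) hbnn
      _ = (B * (Nat.card Hp : ℝ) ^ e) ^ (r + s + 1) * (Nat.card Hp : ℝ) ^ (r + 1) := by ring
  refine hreal2.trans (le_of_eq ?_)
  rw [mul_pow]
  rw [← Real.rpow_natCast ((Nat.card Hp : ℝ) ^ e) (r + s + 1), ← Real.rpow_mul hxpos.le]
  rw [← Real.rpow_natCast (Nat.card Hp : ℝ) (r + 1)]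
  rw [mul_assoc, ← Real.rpow_add hxpos]
  push_cast
  ring_nf
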